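/- In the scalar Gaussian observation model, the conditional distribution of the posterior-mean estimate given the state is Gaussian with mean linear in the state: let c = σ² / (σ² + q²) and V̂ = c · X. Then for (law of V)-almost every v, the conditional distribution of V̂ given V = v (the disintegration kernel of the joint law of (V, V̂)) is the Gaussian measure with mean c · v and variance c² q². -/

import Mathlib

open MeasureTheory ProbabilityTheory

theorem conditional_law_of_estimate_given_state_gaussian
    {Ω : Type*} [MeasurableSpace Ω] (μ : Measure Ω) [IsProbabilityMeasure μ]
    (σ q : ℝ) (hσ : 0 < σ) (hq : 0 < q)
    (V W : Ω → ℝ) (hV : Measurable V) (hW : Measurable W)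
    (hindep : IndepFun V W μ)
    (hVlaw : μ.map V = gaussianReal 0 ⟨σ ^ 2, sq_nonneg σ⟩)
    (hWlaw : μ.map W = gaussianReal 0 ⟨q ^ 2, sq_nonneg q⟩)
    (c : ℝ) (hc : c = σ ^ 2 / (σ ^ 2 + q ^ 2))
    (ρ : Measure (ℝ × ℝ)) [IsFiniteMeasure ρ]
    (hρ : ρ = μ.map fun ω => (V ω, c * (V ω + W ω))) :
    ∀ᵐ v ∂ρ.fst,
      ρ.condKernel v = gaussianReal (c * v) ⟨c ^ 2 * q ^ 2, by positivity⟩ := by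
  have hc2 : (0:ℝ) ≤ c ^ 2 * q ^ 2 := by positivity
  set ν : Measure ℝ := gaussianReal 0 ⟨q ^ 2, sq_nonneg q⟩ with hν
  haveI : IsProbabilityMeasure ν := by rw [hν]; exact instIsProbabilityMeasureGaussianReal _ _
  set νV : Measure ℝ := gaussianReal 0 ⟨σ ^ 2, sq_nonneg σ⟩ with hνV
  haveI : IsProbabilityMeasure νV := by rw [hνV]; exact instIsProbabilityMeasureGaussianReal _ _
  have hg : Measurable (fun p : ℝ × ℝ => c * p.1 + c * p.2) :=
    (measurable_fst.const_mul c).add (measurable_snd.const_mul c)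
  -- the candidate kernel
  set κ : Kernel ℝ ℝ :=
    (Kernel.id ×ₖ Kernel.const ℝ ν).map (fun p : ℝ × ℝ => c * p.1 + c * p.2) with hκdef
  haveI : IsMarkovKernel κ := Kernel.IsMarkovKernel.map _ hg
  -- compute the kernel explicitly
  have hmap : ∀ v : ℝ, ν.map (fun w => c * v + c * w)
      = gaussianReal (c * v) ⟨c ^ 2 * q ^ 2, hc2⟩ := by
    intro v
    have h1 : (fun w : ℝ => c * v + c * w) = (fun x : ℝ => c * v + x) ∘ (fun w : ℝ => c * w) := rfl
    rw [h1, ← Measure.map_map (measurable_const_add _) (measurable_const_mul _), hν]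
    erw [gaussianReal_map_const_mul, show (fun x : ℝ => c * v + x) = ((c * v) + ·) from rfl,
      gaussianReal_map_const_add]
    have hm : c * 0 + c * v = c * v := by ring
    have hvv : (⟨c ^ 2, sq_nonneg c⟩ * ⟨q ^ 2, sq_nonneg q⟩ : NNReal) = ⟨c ^ 2 * q ^ 2, hc2⟩ := by
      ext; rfl
    rw [hm]; exact congrArg _ hvv
  have hκap : ∀ v : ℝ, κ v = gaussianReal (c * v) ⟨c ^ 2 * q ^ 2, hc2⟩ := by
    intro v
    rw [hκdef, Kernel.map_apply _ hg, Kernel.prod_apply, Kernel.id_apply, Kernel.const_apply,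
      Measure.dirac_prod, Measure.map_map hg measurable_prodMk_left]
    exact hmap v
  -- joint law is product
  have hjoint : μ.map (fun ω => (V ω, W ω)) = νV.prod ν := by
    rw [← hVlaw, ← hWlaw]
    exact (indepFun_iff_map_prod_eq_prod_map_map hV.aemeasurable hW.aemeasurable).mp hindep
  have hh : Measurable (fun p : ℝ × ℝ => (p.1, c * (p.1 + p.2))) :=
    measurable_fst.prodMk ((measurable_fst.add measurable_snd).const_mul c)
  have hρ' : ρ = (νV.prod ν).map (fun p : ℝ × ℝ => (p.1, c * (p.1 + p.2))) := by
    rw [← hjoint, Measure.map_map hh (hV.prodMk hW)]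
    exact hρ
  have hfst : ρ.fst = νV := by
    rw [hρ, Measure.fst_map_prodMk (Y := fun ω => c * (V ω + W ω)) ((hV.add hW).const_mul c), hVlaw]
  -- disintegration property
  have hcomp : ρ = ρ.fst ⊗ₘ κ := by
    ext s hs
    rw [Measure.compProd_apply hs, hfst]
    conv_lhs => rw [hρ']
    rw [Measure.map_apply hh hs, Measure.prod_apply (hh hs)]
    refine lintegral_congr fun v => ?_
    have : (Prod.mk v ⁻¹' ((fun p : ℝ × ℝ => (p.1, c * (p.1 + p.2))) ⁻¹' s))
        = (fun w => c * v + c * w) ⁻¹' (Prod.mk v ⁻¹' s) := by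
      ext w; simp [mul_add]
    rw [show (fun w => (v, w)) ⁻¹' ((fun p : ℝ × ℝ => (p.1, c * (p.1 + p.2))) ⁻¹' s)
        = (fun w => c * v + c * w) ⁻¹' (Prod.mk v ⁻¹' s) from this,
      hκap v, ← hmap v, Measure.map_apply (by fun_prop) (measurable_prodMk_left hs)]
  have := eq_condKernel_of_measure_eq_compProd κ hcomp
  filter_upwards [this] with v hv
  rw [← hv, hκap v]
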